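/- arXiv:1907.05924 — 3 statements merged into one kernel-verified Lean document; each statement's English description precedes it below -/
import Mathlib

section
/- Let d ≥ 2 and consider a tensor-train mode hierarchy on Ω = Ω₁ × ⋯ × Ω_d. The family of d-variate product functions T_I(x₁,…,x_d) = ψ^{(1)}_{i₁}(x₁) ψ^{(2)}_{i₁ i₂}(x₂) ⋯ ψ^{(d−1)}_{i₁⋯i_{d−1}}(x_{d−1}) ψ^{(d)}_{i₁⋯i_{d−1}}(x_d), indexed by multi-indices I = (i₁,…,i_{d−1}) ∈ ℕ^{d−1}, is orthonormal in L²(μ₁ ⊗ ⋯ ⊗ μ_d): ⟨T_I, T_J⟩ = 1 if I = J and 0 otherwise. -/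
open MeasureTheory

/-- Given a tensor-train mode hierarchy on `Ω = Ω₁ × ⋯ × Ω_d` (`d ≥ 2`),
levels indexed by `j : Fin d` and multi-indices `I : Fin (d-1) → ℕ` — where the level-`j`
mode depends only on the first `min (j+1) (d-1)` components of the multi-index (i.e. on
components `k ≤ min j (d-2)` in 0-based indexing), each level `j < d-1` is orthonormal in
`L²(μ_j)` as the `j`-th index varies with its prefix fixed, and the last-level modes have
unit norm — the family of product functions
`T_I(x) = ψ^{(1)}_{i₁}(x₁) ⋯ ψ^{(d)}_{i₁⋯i_{d-1}}(x_d)` is orthonormal in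
`L²(μ₁ ⊗ ⋯ ⊗ μ_d)`. -/
theorem tensorTrain_modes_orthonormal
    (d : ℕ) (hd : 2 ≤ d)
    (Ω : Fin d → Type*) [∀ j, MeasurableSpace (Ω j)]
    (μ : ∀ j, Measure (Ω j)) [∀ j, SigmaFinite (μ j)]
    (ψ : (j : Fin d) → (Fin (d - 1) → ℕ) → Lp ℝ 2 (μ j))
    (hdep : ∀ (j : Fin d) (I I' : Fin (d - 1) → ℕ),
      (∀ k : Fin (d - 1), (k : ℕ) ≤ min (j : ℕ) (d - 2) → I k = I' k) → ψ j I = ψ j I')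
    (hortho : ∀ (j : Fin d) (h : (j : ℕ) < d - 1) (I : Fin (d - 1) → ℕ),
      Orthonormal ℝ (fun n : ℕ => ψ j (Function.update I ⟨(j : ℕ), h⟩ n)))
    (hlast : ∀ I : Fin (d - 1) → ℕ, ‖ψ ⟨d - 1, by omega⟩ I‖ = 1)
    (T : (Fin (d - 1) → ℕ) → Lp ℝ 2 (Measure.pi μ))
    (hT : ∀ I, ⇑(T I) =ᵐ[Measure.pi μ] fun x : (j : Fin d) → Ω j => ∏ j, (ψ j I) (x j)) :
    Orthonormal ℝ T := by
  letI : ∀ j, MeasureSpace (Ω j) := fun j => ⟨μ j⟩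
  have key : ∀ I J : Fin (d - 1) → ℕ,
      (inner ℝ (T I) (T J) : ℝ) = ∏ j, (inner ℝ (ψ j I) (ψ j J) : ℝ) := by
    intro I J
    rw [L2.inner_def]
    have h1 : (fun x => (inner ℝ (T I x) (T J x) : ℝ)) =ᵐ[Measure.pi μ]
        fun x : (j : Fin d) → Ω j => ∏ j, ((ψ j I) (x j) * (ψ j J) (x j)) := by
      filter_upwards [hT I, hT J] with x hI hJ
      simp [hI, hJ, Finset.prod_mul_distrib, RCLike.inner_apply]
      ring
    rw [integral_congr_ae h1]
    have h2 : ∫ x : (j : Fin d) → Ω j, ∏ j, ((ψ j I) (x j) * (ψ j J) (x j)) ∂Measure.pi μ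
        = ∏ j, ∫ y : Ω j, (ψ j I) y * (ψ j J) y ∂(μ j) :=
      integral_fintype_prod_eq_prod (fun j (y : Ω j) => (ψ j I) y * (ψ j J) y)
    rw [h2]
    refine Finset.prod_congr rfl fun j _ => ?_
    rw [L2.inner_def]
    refine integral_congr_ae (Filter.Eventually.of_forall fun y => ?_)
    simp [RCLike.inner_apply]
    ring
  rw [orthonormal_iff_ite]
  intro I J
  rw [key]
  by_cases hIJ : I = J
  · subst hIJ
    simp only [if_true]
    refine Finset.prod_eq_one fun j _ => ?_
    have hn : ‖ψ j I‖ = 1 := by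
      by_cases h : (j : ℕ) < d - 1
      · have := ((hortho j h I).1 (I ⟨(j : ℕ), h⟩))
        simpa only [Function.update_eq_self] using this
      · have hj : j = ⟨d - 1, by omega⟩ := by
          apply Fin.ext; simp; omega
        rw [hj]; exact hlast I
    rw [real_inner_self_eq_norm_sq, hn]; norm_num
  · simp only [hIJ, if_false]
    have hne : (Finset.univ.filter fun k : Fin (d - 1) => I k ≠ J k).Nonempty := by
      by_contra h
      apply hIJ
      funext k
      by_contra hk
      exact h ⟨k, Finset.mem_filter.mpr ⟨Finset.mem_univ _, hk⟩⟩
    set k := (Finset.univ.filter fun k : Fin (d - 1) => I k ≠ J k).min' hne with hk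
    have hkmem := (Finset.univ.filter fun k : Fin (d - 1) => I k ≠ J k).min'_mem hne
    rw [← hk] at hkmem
    have hkne : I k ≠ J k := (Finset.mem_filter.mp hkmem).2
    have hmin : ∀ k' : Fin (d - 1), k' < k → I k' = J k' := by
      intro k' hk'
      by_contra h
      have hle := Finset.min'_le (Finset.univ.filter fun k : Fin (d - 1) => I k ≠ J k) k' (Finset.mem_filter.mpr ⟨Finset.mem_univ _, h⟩)
      rw [← hk] at hle
      exact absurd hk' (not_lt.mpr hle)
    have hkd : (k : ℕ) < d - 1 := k.2
    set jk : Fin d := ⟨(k : ℕ), by omega⟩ with hjk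
    have hjkd : (jk : ℕ) < d - 1 := hkd
    have hkk : (⟨(jk : ℕ), hjkd⟩ : Fin (d - 1)) = k := Fin.ext rfl
    have hJk : ψ jk J = ψ jk (Function.update I k (J k)) := by
      apply hdep
      intro k' hk'
      have hk'' : (k' : ℕ) ≤ (k : ℕ) := le_trans hk' (min_le_left _ _)
      rcases eq_or_lt_of_le hk'' with h | h
      · have hek : k' = k := Fin.ext h
        subst hek
        rw [Function.update_self]
      · have hlt : k' < k := h
        rw [Function.update_of_ne (Fin.ne_of_lt hlt)]
        exact (hmin k' hlt).symm
    refine Finset.prod_eq_zero (Finset.mem_univ jk) ?_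
    have h0 := (hortho jk hjkd I).2 (i := I k) (j := J k) hkne
    simp only [hkk, Function.update_eq_self] at h0
    rw [hJk]
    exact h0
end

section
/- Let ψ_i : ℝ → L²(μ) and Ψ_i : ℝ → L²(ν), i = 1,…,r, be differentiable curves such that for every t the family (ψ_i(t)) is orthonormal in L²(μ) and the dynamic orthogonality condition ⟨ψ_i′(t), ψ_k(t)⟩_{L²(μ)} = 0 holds for all i, k. Let u(t) ∈ L²(μ ⊗ ν) be u(t)(x,y) = Σ_{i=1}^r ψ_i(t)(x) Ψ_i(t)(y), so that u′(t)(x,y) = Σ_{i=1}^r (ψ_i′(t)(x) Ψ_i(t)(y) + ψ_i(t)(x) Ψ_i′(t)(y)). Then for every k and every t, the derivative Ψ_k′(t) equals, as an element of L²(ν), the partial pairing of u′(t) with ψ_k(t): Ψ_k′(t)(y) = ∫ u′(t)(x,y) ψ_k(t)(x) dμ(x) for ν-a.e. y. -/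
open MeasureTheory
open scoped RealInnerProductSpace

set_option maxHeartbeats 1000000

/-- **DO propagator: evolution of the `Ψ_k` modes.** Let
`ψ_i : ℝ → L²(μ)` and `Ψ_i : ℝ → L²(ν)` be differentiable curves with `(ψ_i(t))`
orthonormal for every `t` and satisfying the dynamic orthogonality condition
`⟪ψ_i′(t), ψ_k(t)⟫ = 0`.  If `u(t)(x,y) = Σ_i ψ_i(t)(x) Ψ_i(t)(y)`, so that
`u′(t)(x,y) = Σ_i (ψ_i′(t)(x) Ψ_i(t)(y) + ψ_i(t)(x) Ψ_i′(t)(y))`, then for every `k`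
and `t` the derivative `Ψ_k′(t)` equals the partial pairing of `u′(t)` with `ψ_k(t)`:
`Ψ_k′(t)(y) = ∫ u′(t)(x,y) ψ_k(t)(x) dμ(x)` for `ν`-a.e. `y`. -/
theorem DO_propagator_Psi_evolution
    {Ω₁ Ω₂ : Type*} [MeasurableSpace Ω₁] [MeasurableSpace Ω₂]
    (μ : Measure Ω₁) (ν : Measure Ω₂) [SigmaFinite μ] [SigmaFinite ν]
    (r : ℕ)
    (ψ ψd : Fin r → ℝ → Lp ℝ 2 μ) (Ψ Ψd : Fin r → ℝ → Lp ℝ 2 ν)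
    (hψ : ∀ i t, HasDerivAt (ψ i) (ψd i t) t)
    (hΨ : ∀ i t, HasDerivAt (Ψ i) (Ψd i t) t)
    (hON : ∀ t, Orthonormal ℝ (fun i => ψ i t))
    (hDO : ∀ i k t, ⟪ψd i t, ψ k t⟫ = 0)
    (u ud : ℝ → Lp ℝ 2 (μ.prod ν))
    (hu : ∀ t, ⇑(u t) =ᵐ[μ.prod ν] fun p : Ω₁ × Ω₂ => ∑ i, (ψ i t) p.1 * (Ψ i t) p.2)
    (hud : ∀ t, ⇑(ud t) =ᵐ[μ.prod ν] fun p : Ω₁ × Ω₂ =>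
      ∑ i, ((ψd i t) p.1 * (Ψ i t) p.2 + (ψ i t) p.1 * (Ψd i t) p.2))
    (hud_deriv : ∀ t, HasDerivAt u (ud t) t) :
    ∀ (k : Fin r) (t : ℝ),
      ∀ᵐ y ∂ν, (Ψd k t) y = ∫ x, (ud t) (x, y) * (ψ k t) x ∂μ := by
  intro k t
  -- pointwise multiplication of two L² functions is integrable, and integrates to the inner product
  have hint : ∀ f g : Lp ℝ 2 μ, Integrable (fun x => f x * g x) μ := by
    intro f g
    have := L2.integrable_inner (𝕜 := ℝ) g f
    simpa [RCLike.inner_apply] using this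
  have hinner : ∀ f g : Lp ℝ 2 μ, ∫ x, f x * g x ∂μ = ⟪f, g⟫ := by
    intro f g
    rw [L2.inner_def]
    simp [RCLike.inner_apply]
    exact integral_congr_ae (Filter.Eventually.of_forall fun x => mul_comm _ _)
  -- transfer the a.e. identity for `ud t` to the swapped product measure
  have hswap : ∀ᵐ q ∂ν.prod μ, (ud t) (q.2, q.1)
      = ∑ i, ((ψd i t) q.2 * (Ψ i t) q.1 + (ψ i t) q.2 * (Ψd i t) q.1) := by
    have hmp : MeasurePreserving (Prod.swap : Ω₂ × Ω₁ → Ω₁ × Ω₂) (ν.prod μ) (μ.prod ν) :=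
      Measure.measurePreserving_swap
    exact hmp.quasiMeasurePreserving.ae (hud t)
  have hae : ∀ᵐ y ∂ν, ∀ᵐ x ∂μ, (ud t) (x, y)
      = ∑ i, ((ψd i t) x * (Ψ i t) y + (ψ i t) x * (Ψd i t) y) :=
    Measure.ae_ae_of_ae_prod hswap
  filter_upwards [hae] with y hy
  have h1 : ∫ x, (ud t) (x, y) * (ψ k t) x ∂μ
      = ∫ x, (∑ i, ((ψd i t) x * (Ψ i t) y + (ψ i t) x * (Ψd i t) y)) * (ψ k t) x ∂μ :=
    integral_congr_ae (hy.mono fun x hx => by dsimp only; rw [hx])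
  rw [h1]
  have h2 : ∀ x, (∑ i, ((ψd i t) x * (Ψ i t) y + (ψ i t) x * (Ψd i t) y)) * (ψ k t) x
      = ∑ i, ((Ψ i t) y * ((ψd i t) x * (ψ k t) x) + (Ψd i t) y * ((ψ i t) x * (ψ k t) x)) := by
    intro x
    rw [Finset.sum_mul]
    exact Finset.sum_congr rfl fun i _ => by ring
  simp_rw [h2]
  rw [integral_finset_sum (f := fun (i : Fin r) (x : Ω₁) =>
      (Ψ i t) y * ((ψd i t) x * (ψ k t) x) + (Ψd i t) y * ((ψ i t) x * (ψ k t) x)) _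
    (fun i _ =>
    ((hint (ψd i t) (ψ k t)).const_mul _).add ((hint (ψ i t) (ψ k t)).const_mul _))]
  have h3 : ∀ i : Fin r,
      ∫ x, ((Ψ i t) y * ((ψd i t) x * (ψ k t) x) + (Ψd i t) y * ((ψ i t) x * (ψ k t) x)) ∂μ
      = (Ψd i t) y * (if i = k then (1:ℝ) else 0) := by
    intro i
    rw [integral_add ((hint (ψd i t) (ψ k t)).const_mul _) ((hint (ψ i t) (ψ k t)).const_mul _),
      integral_const_mul, integral_const_mul, hinner, hinner, hDO i k t,
      (orthonormal_iff_ite.mp (hON t)) i k]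
    ring
  simp_rw [h3]
  simp
end

section
/- Let ψ_i : ℝ → L²(μ) and Ψ_i : ℝ → L²(ν), i = 1,…,r, be differentiable curves such that for every t the family (ψ_i(t)) is orthonormal in L²(μ) and the dynamic orthogonality condition ⟨ψ_i′(t), ψ_k(t)⟩_{L²(μ)} = 0 holds for all i, k. Let u(t) ∈ L²(μ ⊗ ν) be u(t)(x,y) = Σ_{i=1}^r ψ_i(t)(x) Ψ_i(t)(y), so that u′(t)(x,y) = Σ_{i=1}^r (ψ_i′(t)(x) Ψ_i(t)(y) + ψ_i(t)(x) Ψ_i′(t)(y)). Then for every k and every t the following identity holds in L²(μ): Σ_{i=1}^r ⟨Ψ_i(t), Ψ_k(t)⟩_{L²(ν)} · ψ_i′(t) = (x ↦ ∫ u′(t)(x,y) Ψ_k(t)(y) dν(y)) − Σ_{i=1}^r ⟨u′(t), ψ_i(t) Ψ_k(t)⟩_{L²(μ⊗ν)} · ψ_i(t), where ψ_i(t)Ψ_k(t) denotes the product function (x,y) ↦ ψ_i(t)(x) Ψ_k(t)(y). -/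
open MeasureTheory
open scoped RealInnerProductSpace

section Aux
variable {α : Type*} [MeasurableSpace α] {μ : Measure α}

lemma myInnerDef (f g : Lp ℝ 2 μ) : ⟪f, g⟫ = ∫ x, f x * g x ∂μ := by
  rw [L2.inner_def]
  simp [RCLike.inner_apply]
  exact integral_congr_ae (Filter.Eventually.of_forall fun x => mul_comm _ _)

lemma myIntegrableMul (f g : Lp ℝ 2 μ) : Integrable (fun x => f x * g x) μ := by
  simpa [RCLike.inner_apply, mul_comm] using L2.integrable_inner (𝕜 := ℝ) f g

lemma myCoeFnSum {ι : Type*} (s : Finset ι) (f : ι → Lp ℝ 2 μ) :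
    ⇑(∑ i ∈ s, f i) =ᵐ[μ] fun x => ∑ i ∈ s, f i x := by
  classical
  induction s using Finset.induction_on with
  | empty => simp only [Finset.sum_empty]; exact Lp.coeFn_zero (E := ℝ) 2 μ
  | @insert a s h ih =>
      rw [Finset.sum_insert h]
      filter_upwards [Lp.coeFn_add (f a) (∑ i ∈ s, f i), ih] with x hx hx'
      simp only [hx, Pi.add_apply, hx', Finset.sum_insert h]

lemma myCoeFnSmulSum {ι : Type*} [Fintype ι] (c : ι → ℝ) (f : ι → Lp ℝ 2 μ) :
    ⇑(∑ i, c i • f i) =ᵐ[μ] fun x => ∑ i, c i * f i x := by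
  filter_upwards [myCoeFnSum Finset.univ (fun i => c i • f i),
    ae_all_iff.mpr fun i => Lp.coeFn_smul (c i) (f i)] with x hx hx'
  rw [hx]
  exact Finset.sum_congr rfl fun i _ => by rw [hx' i]; rfl
end Aux

/-- **DO propagator: evolution of the orthonormal modes `ψ_i`.** Let
`ψ_i : ℝ → L²(μ)` and `Ψ_i : ℝ → L²(ν)` be differentiable curves with `(ψ_i(t))`
orthonormal for every `t` and satisfying the dynamic orthogonality condition
`⟪ψ_i′(t), ψ_k(t)⟫ = 0`.  If `u(t)(x,y) = Σ_i ψ_i(t)(x) Ψ_i(t)(y)`, so that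
`u′(t)(x,y) = Σ_i (ψ_i′(t)(x) Ψ_i(t)(y) + ψ_i(t)(x) Ψ_i′(t)(y))`, then for every `k` and
`t` the identity
`Σ_i ⟪Ψ_i(t), Ψ_k(t)⟫ ψ_i′(t)
  = (x ↦ ∫ u′(t)(x,y) Ψ_k(t)(y) dν(y)) − Σ_i ⟪u′(t), ψ_i(t)Ψ_k(t)⟫ ψ_i(t)`
holds in `L²(μ)`, where `ψ_i(t)Ψ_k(t)` denotes the product function
`(x,y) ↦ ψ_i(t)(x) Ψ_k(t)(y)`. -/
theorem DO_propagator_psi_evolution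
    {Ω₁ Ω₂ : Type*} [MeasurableSpace Ω₁] [MeasurableSpace Ω₂]
    (μ : Measure Ω₁) (ν : Measure Ω₂) [SigmaFinite μ] [SigmaFinite ν]
    (r : ℕ)
    (ψ ψd : Fin r → ℝ → Lp ℝ 2 μ) (Ψ Ψd : Fin r → ℝ → Lp ℝ 2 ν)
    (hψ : ∀ i t, HasDerivAt (ψ i) (ψd i t) t)
    (hΨ : ∀ i t, HasDerivAt (Ψ i) (Ψd i t) t)
    (hON : ∀ t, Orthonormal ℝ (fun i => ψ i t))
    (hDO : ∀ i k t, ⟪ψd i t, ψ k t⟫ = 0)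
    (u ud : ℝ → Lp ℝ 2 (μ.prod ν))
    (hu : ∀ t, ⇑(u t) =ᵐ[μ.prod ν] fun p : Ω₁ × Ω₂ => ∑ i, (ψ i t) p.1 * (Ψ i t) p.2)
    (hud : ∀ t, ⇑(ud t) =ᵐ[μ.prod ν] fun p : Ω₁ × Ω₂ =>
      ∑ i, ((ψd i t) p.1 * (Ψ i t) p.2 + (ψ i t) p.1 * (Ψd i t) p.2))
    (hud_deriv : ∀ t, HasDerivAt u (ud t) t) :
    ∀ (k : Fin r) (t : ℝ)
      -- `g` is the partial pairing `x ↦ ∫ u′(t)(x,y) Ψ_k(t)(y) dν(y)` as an element of `L²(μ)`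
      (g : Lp ℝ 2 μ), (⇑g =ᵐ[μ] fun x => ∫ y, (ud t) (x, y) * (Ψ k t) y ∂ν) →
      -- `E i` is the product function `(x,y) ↦ ψ_i(t)(x) Ψ_k(t)(y)` as an element of `L²(μ⊗ν)`
      ∀ E : Fin r → Lp ℝ 2 (μ.prod ν),
        (∀ i, ⇑(E i) =ᵐ[μ.prod ν] fun p : Ω₁ × Ω₂ => (ψ i t) p.1 * (Ψ k t) p.2) →
      ∑ i, ⟪Ψ i t, Ψ k t⟫ • ψd i t = g - ∑ i, ⟪ud t, E i⟫ • ψ i t := by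
  intro k t g hg E hE
  classical
  -- Step A: compute the inner products ⟪ud t, E i⟫
  have key : ∀ i, ⟪ud t, E i⟫ = ⟪Ψd i t, Ψ k t⟫ := by
    intro i
    have int1 : ∀ j : Fin r, Integrable (fun p : Ω₁ × Ω₂ =>
        ((ψd j t) p.1 * (ψ i t) p.1) * ((Ψ j t) p.2 * (Ψ k t) p.2)) (μ.prod ν) := fun j =>
      (myIntegrableMul (ψd j t) (ψ i t)).mul_prod (myIntegrableMul (Ψ j t) (Ψ k t))
    have int2 : ∀ j : Fin r, Integrable (fun p : Ω₁ × Ω₂ =>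
        ((ψ j t) p.1 * (ψ i t) p.1) * ((Ψd j t) p.2 * (Ψ k t) p.2)) (μ.prod ν) := fun j =>
      (myIntegrableMul (ψ j t) (ψ i t)).mul_prod (myIntegrableMul (Ψd j t) (Ψ k t))
    have h1 : (fun p : Ω₁ × Ω₂ => (ud t) p * (E i) p) =ᵐ[μ.prod ν]
        fun p => ∑ j, (((ψd j t) p.1 * (ψ i t) p.1) * ((Ψ j t) p.2 * (Ψ k t) p.2)
          + ((ψ j t) p.1 * (ψ i t) p.1) * ((Ψd j t) p.2 * (Ψ k t) p.2)) := by
      filter_upwards [hud t, hE i] with p hp hp'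
      rw [hp, hp', Finset.sum_mul]
      exact Finset.sum_congr rfl fun j _ => by ring
    have h2 : ∀ j : Fin r,
        (∫ p : Ω₁ × Ω₂, (((ψd j t) p.1 * (ψ i t) p.1) * ((Ψ j t) p.2 * (Ψ k t) p.2)
          + ((ψ j t) p.1 * (ψ i t) p.1) * ((Ψd j t) p.2 * (Ψ k t) p.2)) ∂(μ.prod ν))
        = ⟪ψd j t, ψ i t⟫ * ⟪Ψ j t, Ψ k t⟫ + ⟪ψ j t, ψ i t⟫ * ⟪Ψd j t, Ψ k t⟫ := by
      intro j
      calc (∫ p : Ω₁ × Ω₂, (((ψd j t) p.1 * (ψ i t) p.1) * ((Ψ j t) p.2 * (Ψ k t) p.2)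
              + ((ψ j t) p.1 * (ψ i t) p.1) * ((Ψd j t) p.2 * (Ψ k t) p.2)) ∂(μ.prod ν))
          = (∫ p : Ω₁ × Ω₂, ((ψd j t) p.1 * (ψ i t) p.1) * ((Ψ j t) p.2 * (Ψ k t) p.2)
              ∂(μ.prod ν))
            + ∫ p : Ω₁ × Ω₂, ((ψ j t) p.1 * (ψ i t) p.1) * ((Ψd j t) p.2 * (Ψ k t) p.2)
              ∂(μ.prod ν) := integral_add (int1 j) (int2 j)
        _ = ⟪ψd j t, ψ i t⟫ * ⟪Ψ j t, Ψ k t⟫ + ⟪ψ j t, ψ i t⟫ * ⟪Ψd j t, Ψ k t⟫ := by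
            rw [myInnerDef, myInnerDef, myInnerDef, myInnerDef]
            congr 1
            · exact integral_prod_mul (f := fun x => (ψd j t) x * (ψ i t) x)
                (g := fun y => (Ψ j t) y * (Ψ k t) y)
            · exact integral_prod_mul (f := fun x => (ψ j t) x * (ψ i t) x)
                (g := fun y => (Ψd j t) y * (Ψ k t) y)
    have hONite := orthonormal_iff_ite.mp (hON t)
    calc ⟪ud t, E i⟫ = ∫ p, (ud t) p * (E i) p ∂(μ.prod ν) := myInnerDef _ _
      _ = ∫ p : Ω₁ × Ω₂, (∑ j, (((ψd j t) p.1 * (ψ i t) p.1) * ((Ψ j t) p.2 * (Ψ k t) p.2)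
            + ((ψ j t) p.1 * (ψ i t) p.1) * ((Ψd j t) p.2 * (Ψ k t) p.2))) ∂(μ.prod ν) :=
          integral_congr_ae h1
      _ = ∑ j, ∫ p : Ω₁ × Ω₂, (((ψd j t) p.1 * (ψ i t) p.1) * ((Ψ j t) p.2 * (Ψ k t) p.2)
            + ((ψ j t) p.1 * (ψ i t) p.1) * ((Ψd j t) p.2 * (Ψ k t) p.2)) ∂(μ.prod ν) :=
          integral_finset_sum _ fun j _ => (int1 j).add (int2 j)
      _ = ∑ j, (⟪ψd j t, ψ i t⟫ * ⟪Ψ j t, Ψ k t⟫ + ⟪ψ j t, ψ i t⟫ * ⟪Ψd j t, Ψ k t⟫) :=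
          Finset.sum_congr rfl fun j _ => h2 j
      _ = ⟪Ψd i t, Ψ k t⟫ := by
          simp [hDO, hONite, ite_mul]
  -- Step B: identify g
  have hB : g = (∑ i, ⟪Ψ i t, Ψ k t⟫ • ψd i t) + ∑ i, ⟪Ψd i t, Ψ k t⟫ • ψ i t := by
    apply Lp.ext
    have hR : ⇑((∑ i, ⟪Ψ i t, Ψ k t⟫ • ψd i t) + ∑ i, ⟪Ψd i t, Ψ k t⟫ • ψ i t) =ᵐ[μ]
        fun x => (∑ i, ⟪Ψ i t, Ψ k t⟫ * (ψd i t) x)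
          + ∑ i, ⟪Ψd i t, Ψ k t⟫ * (ψ i t) x := by
      filter_upwards [Lp.coeFn_add (∑ i, ⟪Ψ i t, Ψ k t⟫ • ψd i t)
          (∑ i, ⟪Ψd i t, Ψ k t⟫ • ψ i t),
        myCoeFnSmulSum (fun i => ⟪Ψ i t, Ψ k t⟫) (fun i => ψd i t),
        myCoeFnSmulSum (fun i => ⟪Ψd i t, Ψ k t⟫) (fun i => ψ i t)] with x hx h1 h2
      simp only [hx, Pi.add_apply, h1, h2]
    have hL : ⇑g =ᵐ[μ]
        fun x => (∑ i, ⟪Ψ i t, Ψ k t⟫ * (ψd i t) x)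
          + ∑ i, ⟪Ψd i t, Ψ k t⟫ * (ψ i t) x := by
      filter_upwards [hg, Measure.ae_ae_of_ae_prod (hud t)] with x hx hx2
      rw [hx]
      have intb1 : ∀ i : Fin r, Integrable
          (fun y => (ψd i t) x * ((Ψ i t) y * (Ψ k t) y)) ν := fun i =>
        (myIntegrableMul (Ψ i t) (Ψ k t)).const_mul _
      have intb2 : ∀ i : Fin r, Integrable
          (fun y => (ψ i t) x * ((Ψd i t) y * (Ψ k t) y)) ν := fun i =>
        (myIntegrableMul (Ψd i t) (Ψ k t)).const_mul _
      calc ∫ y, (ud t) (x, y) * (Ψ k t) y ∂ν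
          = ∫ y, (∑ i, ((ψd i t) x * ((Ψ i t) y * (Ψ k t) y)
              + (ψ i t) x * ((Ψd i t) y * (Ψ k t) y))) ∂ν := by
            refine integral_congr_ae ?_
            filter_upwards [hx2] with y hy
            rw [hy, Finset.sum_mul]
            exact Finset.sum_congr rfl fun i _ => by ring
        _ = ∑ i, ∫ y, ((ψd i t) x * ((Ψ i t) y * (Ψ k t) y)
              + (ψ i t) x * ((Ψd i t) y * (Ψ k t) y)) ∂ν :=
            integral_finset_sum _ fun i _ => (intb1 i).add (intb2 i)
        _ = ∑ i, (⟪Ψ i t, Ψ k t⟫ * (ψd i t) x + ⟪Ψd i t, Ψ k t⟫ * (ψ i t) x) := by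
            refine Finset.sum_congr rfl fun i _ => ?_
            calc ∫ y, ((ψd i t) x * ((Ψ i t) y * (Ψ k t) y)
                  + (ψ i t) x * ((Ψd i t) y * (Ψ k t) y)) ∂ν
                = (∫ y, (ψd i t) x * ((Ψ i t) y * (Ψ k t) y) ∂ν)
                  + ∫ y, (ψ i t) x * ((Ψd i t) y * (Ψ k t) y) ∂ν :=
                  integral_add (intb1 i) (intb2 i)
              _ = (ψd i t) x * (∫ y, (Ψ i t) y * (Ψ k t) y ∂ν)
                  + (ψ i t) x * ∫ y, (Ψd i t) y * (Ψ k t) y ∂ν := by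
                  congr 1
                  · exact integral_const_mul _ (fun y => (Ψ i t) y * (Ψ k t) y)
                  · exact integral_const_mul _ (fun y => (Ψd i t) y * (Ψ k t) y)
              _ = ⟪Ψ i t, Ψ k t⟫ * (ψd i t) x + ⟪Ψd i t, Ψ k t⟫ * (ψ i t) x := by
                  rw [myInnerDef, myInnerDef]; ring
        _ = (∑ i, ⟪Ψ i t, Ψ k t⟫ * (ψd i t) x)
            + ∑ i, ⟪Ψd i t, Ψ k t⟫ * (ψ i t) x := Finset.sum_add_distrib
    exact hL.trans hR.symm
  have hsum : ∑ i, ⟪ud t, E i⟫ • ψ i t = ∑ i, ⟪Ψd i t, Ψ k t⟫ • ψ i t :=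
    Finset.sum_congr rfl fun i _ => by rw [key i]
  rw [hsum, hB]
  abel
end
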